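/- Let n ≥ 2 and let T be a continuous field of symmetric bilinear forms on ℝⁿ (i.e. a continuous map assigning to each x ∈ ℝⁿ a symmetric bilinear form T(x) on ℝⁿ) which is rotationally symmetric, meaning T(γx)(γu, γv) = T(x)(u, v) for every γ ∈ SO(n), every x ∈ ℝⁿ and all u, v ∈ ℝⁿ. If T(x) is a nondegenerate bilinear form for every x ∈ ℝⁿ, then either T(x) is positive definite for every x ∈ ℝⁿ, or T(x) is negative definite for every x ∈ ℝⁿ. -/

import Mathlib

noncomputable section

namespace Stmt1Aux

variable {n : ℕ}

local notation "E" => EuclideanSpace ℝ (Fin n)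

lemma expand (T : E → E →ₗ[ℝ] E →ₗ[ℝ] ℝ) (x u v : E) :
    T x u v = ∑ i, ∑ j, u i * v j *
      T x (EuclideanSpace.single i 1) (EuclideanSpace.single j 1) := by
  have hu : ∑ i, u i • (EuclideanSpace.single i (1:ℝ)) = u := by
    simpa [EuclideanSpace.basisFun_apply, EuclideanSpace.basisFun_repr] using
      (EuclideanSpace.basisFun (Fin n) ℝ).sum_repr u
  have hv : ∑ j, v j • (EuclideanSpace.single j (1:ℝ)) = v := by
    simpa [EuclideanSpace.basisFun_apply, EuclideanSpace.basisFun_repr] using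
      (EuclideanSpace.basisFun (Fin n) ℝ).sum_repr v
  conv_lhs => rw [← hu, ← hv]
  simp only [map_sum, LinearMap.sum_apply, map_smul, LinearMap.smul_apply,
    smul_eq_mul, Finset.mul_sum]
  rw [Finset.sum_comm]
  exact Finset.sum_congr rfl fun i _ => Finset.sum_congr rfl fun j _ => by ring

lemma cont_quad (T : E → E →ₗ[ℝ] E →ₗ[ℝ] ℝ)
    (hcont : ∀ u v, Continuous fun x => T x u v) :
    Continuous fun p : (E × E) => T p.1 p.2 p.2 := by
  have : (fun p : (E × E) => T p.1 p.2 p.2) = fun p : (E × E) =>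
      ∑ i, ∑ j, p.2 i * p.2 j *
        T p.1 (EuclideanSpace.single i 1) (EuclideanSpace.single j 1) := by
    funext p; exact expand T p.1 p.2 p.2
  rw [this]
  refine continuous_finset_sum _ fun i _ => continuous_finset_sum _ fun j _ => ?_
  exact (((PiLp.continuous_apply 2 _ i).comp continuous_snd).mul
    ((PiLp.continuous_apply 2 _ j).comp continuous_snd)).mul ((hcont _ _).comp continuous_fst)



lemma scale (T : E → E →ₗ[ℝ] E →ₗ[ℝ] ℝ) (x : E) (c : ℝ) (u : E) :
    T x (c • u) (c • u) = c ^ 2 * T x u u := by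
  simp only [map_smul, LinearMap.smul_apply, smul_eq_mul]; ring

lemma psd_pd (T : E → E →ₗ[ℝ] E →ₗ[ℝ] ℝ)
    (hsymm : ∀ x u v, T x u v = T x v u)
    (hnd : ∀ x u, (∀ v, T x u v = 0) → u = 0)
    (x : E) (hx : ∀ u : E, 0 ≤ T x u u) :
    ∀ u : E, u ≠ 0 → 0 < T x u u := by
  intro u hu
  rcases (hx u).lt_or_eq with h | h
  · exact h
  · exfalso
    apply hu
    apply hnd x u
    intro v
    by_contra ha
    have hb : 0 ≤ T x v v := hx v
    have key := hx ((T x v v + 1) • u + (-(T x u v)) • v)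
    have hsy : T x v u = T x u v := hsymm x v u
    simp only [map_add, map_smul, LinearMap.add_apply, LinearMap.smul_apply,
      smul_eq_mul] at key
    rw [hsy, ← h] at key
    -- key : 0 <= (b+1)^2*Tuu + ... = -a^2*(b+2)
    nlinarith [mul_self_pos.mpr ha, hb, key]

lemma key (T : E → E →ₗ[ℝ] E →ₗ[ℝ] ℝ)
    (hcont : ∀ u v, Continuous fun x => T x u v)
    (hsymm : ∀ x u v, T x u v = T x v u)
    (hnd : ∀ x u, (∀ v, T x u v = 0) → u = 0)
    (h0 : ∀ u : E, u ≠ 0 → 0 < T 0 u u) :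
    ∀ x u, u ≠ 0 → 0 < T x u u := by
  set P : Set E := {x | ∀ u : E, 0 ≤ T x u u} with hPdef
  have hpd : ∀ x ∈ P, ∀ u : E, u ≠ 0 → 0 < T x u u := fun x hx =>
    psd_pd T hsymm hnd x hx
  have hclosed : IsClosed P := by
    have hPeq : P = ⋂ u : E, {x | 0 ≤ T x u u} := by
      ext x; simp [hPdef, Set.mem_iInter]
    rw [hPeq]
    exact isClosed_iInter fun u => isClosed_le continuous_const (hcont u u)
  have hopen : IsOpen P := by
    rw [isOpen_iff_mem_nhds]
    intro x₀ hx₀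
    have hS : IsCompact (Metric.sphere (0:E) 1) := isCompact_sphere _ _
    have hU : IsOpen {p : E × E | 0 < T p.1 p.2 p.2} :=
      isOpen_lt continuous_const (cont_quad T hcont)
    have hsub : ({x₀} : Set E) ×ˢ Metric.sphere (0:E) 1 ⊆
        {p : E × E | 0 < T p.1 p.2 p.2} := by
      rintro ⟨x, w⟩ ⟨hx, hw⟩
      have hx' : x = x₀ := hx
      have hwne : w ≠ 0 := by
        intro h
        rw [Metric.mem_sphere, dist_zero_right] at hw
        rw [h] at hw; simp at hw
      show 0 < T x w w
      rw [hx']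
      exact hpd x₀ hx₀ w hwne
    obtain ⟨A, B, hA, hB, hxA, hSB, hAB⟩ :=
      generalized_tube_lemma isCompact_singleton hS hU hsub
    refine Filter.mem_of_superset (hA.mem_nhds (hxA rfl)) ?_
    intro x hx u
    rcases eq_or_ne u 0 with rfl | hu
    · simp
    · have hnu : ‖u‖ ≠ 0 := norm_ne_zero_iff.mpr hu
      have hw : (‖u‖⁻¹ • u) ∈ Metric.sphere (0:E) 1 := by
        rw [Metric.mem_sphere, dist_zero_right, norm_smul]
        simp [hnu]
      have h1' : (x, ‖u‖⁻¹ • u) ∈ {p : E × E | 0 < T p.1 p.2 p.2} :=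
        hAB (Set.mk_mem_prod hx (hSB hw))
      have h1 : 0 < T x (‖u‖⁻¹ • u) (‖u‖⁻¹ • u) := h1'
      have h2 : (‖u‖ : ℝ) • (‖u‖⁻¹ • u) = u := smul_inv_smul₀ hnu u
      have h3 : T x u u = ‖u‖ ^ 2 * T x (‖u‖⁻¹ • u) (‖u‖⁻¹ • u) := by
        conv_lhs => rw [← h2]
        rw [scale]
      rw [h3]
      positivity
  have h0P : (0:E) ∈ P := by
    intro u
    rcases eq_or_ne u 0 with rfl | h
    · simp
    · exact (h0 u h).le
  have hPuniv : P = Set.univ := IsClopen.eq_univ ⟨hclosed, hopen⟩ ⟨0, h0P⟩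
  intro x u hu
  exact hpd x (hPuniv ▸ Set.mem_univ x) u hu

open scoped RealInnerProductSpace

open Submodule

/-- Determinant of a linear isometry equivalence. -/
def D (f : E ≃ₗᵢ[ℝ] E) : ℝ := LinearMap.det (f.toLinearEquiv : E →ₗ[ℝ] E)

lemma D_trans (f g : E ≃ₗᵢ[ℝ] E) : D (f.trans g) = D f * D g := by
  have h : ((f.trans g).toLinearEquiv : E →ₗ[ℝ] E)
      = ((g.toLinearEquiv : E →ₗ[ℝ] E)).comp ((f.toLinearEquiv : E →ₗ[ℝ] E)) := rfl
  rw [D, h, LinearMap.det_comp, mul_comm]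
  rfl

lemma D_refl : D (LinearIsometryEquiv.refl ℝ E) = 1 := by
  have h : (((LinearIsometryEquiv.refl ℝ E)).toLinearEquiv : E →ₗ[ℝ] E)
      = LinearMap.id := rfl
  rw [D, h, LinearMap.det_id]

lemma reflection_twice (K : Submodule ℝ E) [HasOrthogonalProjection K] :
    (reflection K).trans (reflection K) = LinearIsometryEquiv.refl ℝ E := by
  ext x
  simp [LinearIsometryEquiv.trans_apply, reflection_reflection]

lemma D_reflection_sq (K : Submodule ℝ E) [HasOrthogonalProjection K] :
    D (reflection K) * D (reflection K) = 1 := by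
  rw [← D_trans, reflection_twice, D_refl]

lemma reflection_congr {K L : Submodule ℝ E} [HasOrthogonalProjection K]
    [HasOrthogonalProjection L] (h : K = L) : reflection K = reflection L := by
  subst h; rfl

lemma map_orth_span (σ : E ≃ₗᵢ[ℝ] E) (a : E) :
    ((ℝ ∙ a)ᗮ).map (σ.toLinearEquiv : E →ₗ[ℝ] E) = (ℝ ∙ (σ a))ᗮ := by
  ext x
  rw [Submodule.mem_map_equiv, Submodule.mem_orthogonal_singleton_iff_inner_right,
    Submodule.mem_orthogonal_singleton_iff_inner_right]
  have h : ⟪σ a, x⟫ = ⟪a, σ.toLinearEquiv.symm x⟫ := by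
    conv_lhs => rw [show x = σ (σ.toLinearEquiv.symm x) from (σ.apply_symm_apply x).symm]
    exact σ.inner_map_map a _
  rw [h]

lemma D_reflection_eq (a b : E) (ha : ‖a‖ = 1) (hb : ‖b‖ = 1) :
    D (reflection (ℝ ∙ a)ᗮ) = D (reflection (ℝ ∙ b)ᗮ) := by
  rcases eq_or_ne a b with rfl | hab
  · rfl
  · set σ := reflection (ℝ ∙ (a - b))ᗮ with hσ
    have hσa : σ a = b := reflection_sub (ha.trans hb.symm)
    have hmap : ((ℝ ∙ a)ᗮ).map (σ.toLinearEquiv : E →ₗ[ℝ] E) = (ℝ ∙ b)ᗮ := by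
      rw [map_orth_span σ a, hσa]
    have h1 : reflection (ℝ ∙ b)ᗮ = σ.symm.trans ((reflection (ℝ ∙ a)ᗮ).trans σ) :=
      (reflection_congr hmap.symm).trans (reflection_map σ _)
    have h2 : D σ.symm * D σ = 1 := by
      have h3 : σ.symm.trans σ = LinearIsometryEquiv.refl ℝ E := by
        ext x; simp
      rw [← D_trans, h3, D_refl]
    rw [h1, D_trans, D_trans]
    linear_combination (-(D (reflection (ℝ ∙ a)ᗮ))) * h2

lemma D_reflection_eq' (a b : E) (ha : a ≠ 0) (hb : b ≠ 0) :
    D (reflection (ℝ ∙ a)ᗮ) = D (reflection (ℝ ∙ b)ᗮ) := by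
  have hspan : ∀ c : E, c ≠ 0 → (ℝ ∙ c) = ℝ ∙ (‖c‖⁻¹ • c) := by
    intro c hc
    exact (Submodule.span_singleton_smul_eq
      (IsUnit.mk0 _ (inv_ne_zero (norm_ne_zero_iff.mpr hc))) c).symm
  have hna : ‖(‖a‖⁻¹ • a)‖ = 1 := by
    rw [norm_smul]; simp [norm_ne_zero_iff.mpr ha]
  have hnb : ‖(‖b‖⁻¹ • b)‖ = 1 := by
    rw [norm_smul]; simp [norm_ne_zero_iff.mpr hb]
  have hoa : ((ℝ ∙ a)ᗮ : Submodule ℝ E) = (ℝ ∙ (‖a‖⁻¹ • a))ᗮ := by rw [← hspan a ha]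
  have hob : ((ℝ ∙ b)ᗮ : Submodule ℝ E) = (ℝ ∙ (‖b‖⁻¹ • b))ᗮ := by rw [← hspan b hb]
  calc D (reflection (ℝ ∙ a)ᗮ) = D (reflection (ℝ ∙ (‖a‖⁻¹ • a))ᗮ) :=
        congrArg D (reflection_congr hoa)
    _ = D (reflection (ℝ ∙ (‖b‖⁻¹ • b))ᗮ) := D_reflection_eq _ _ hna hnb
    _ = D (reflection (ℝ ∙ b)ᗮ) := congrArg D (reflection_congr hob.symm)

lemma exists_rotation (hn : 2 ≤ n) (u w : E) (hu : ‖u‖ = 1) (hw : ‖w‖ = 1) :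
    ∃ γ : E ≃ₗᵢ[ℝ] E, D γ = 1 ∧ γ u = w := by
  have hwne : w ≠ 0 := by
    intro h; rw [h] at hw; simp at hw
  have hfr : 0 < Module.finrank ℝ ((ℝ ∙ w)ᗮ) := by
    have h1 := Submodule.finrank_add_finrank_orthogonal (K := ((ℝ ∙ w) : Submodule ℝ E))
    rw [finrank_span_singleton hwne, finrank_euclideanSpace_fin] at h1
    omega
  obtain ⟨z, hz⟩ : ∃ z : ((ℝ ∙ w)ᗮ : Submodule ℝ E), z ≠ 0 := by
    haveI := Module.finrank_pos_iff.mp hfr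
    exact exists_ne 0
  have hzE : (z : E) ≠ 0 := fun h => hz (Subtype.ext h)
  have hzw : ⟪w, (z : E)⟫ = 0 :=
    Submodule.mem_orthogonal_singleton_iff_inner_right.mp z.2
  have hw_in : w ∈ (ℝ ∙ (z : E))ᗮ := by
    rw [Submodule.mem_orthogonal_singleton_iff_inner_right, real_inner_comm]
    exact hzw
  have hR2w : reflection (ℝ ∙ (z : E))ᗮ w = w := reflection_mem_subspace_eq_self hw_in
  rcases eq_or_ne u w with rfl | huw
  · refine ⟨(reflection (ℝ ∙ (z : E))ᗮ).trans (reflection (ℝ ∙ (z : E))ᗮ), ?_, ?_⟩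
    · rw [D_trans]; exact D_reflection_sq _
    · rw [LinearIsometryEquiv.trans_apply, reflection_reflection]
  · have huwne : u - w ≠ 0 := sub_ne_zero.mpr huw
    have hR1 : reflection (ℝ ∙ (u - w))ᗮ u = w := reflection_sub (hu.trans hw.symm)
    refine ⟨(reflection (ℝ ∙ (u - w))ᗮ).trans (reflection (ℝ ∙ (z : E))ᗮ), ?_, ?_⟩
    · rw [D_trans, D_reflection_eq' (u - w) (z : E) huwne hzE]
      exact D_reflection_sq _
    · rw [LinearIsometryEquiv.trans_apply, hR1, hR2w]

end Stmt1Aux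

/-- A continuous, rotationally symmetric, everywhere nondegenerate field of symmetric
bilinear forms on `ℝⁿ` (`n ≥ 2`) is either everywhere positive definite or everywhere
negative definite. -/
theorem stmt_1 (n : ℕ) (hn : 2 ≤ n)
    (T : EuclideanSpace ℝ (Fin n) →
      EuclideanSpace ℝ (Fin n) →ₗ[ℝ] EuclideanSpace ℝ (Fin n) →ₗ[ℝ] ℝ)
    (hcont : ∀ u v, Continuous fun x => T x u v)
    (hsymm : ∀ x u v, T x u v = T x v u)
    (hrot : ∀ γ : EuclideanSpace ℝ (Fin n) ≃ₗᵢ[ℝ] EuclideanSpace ℝ (Fin n),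
      LinearMap.det (γ.toLinearEquiv : EuclideanSpace ℝ (Fin n) →ₗ[ℝ] EuclideanSpace ℝ (Fin n)) = 1 →
      ∀ x u v, T (γ x) (γ u) (γ v) = T x u v)
    (hnd : ∀ x u, (∀ v, T x u v = 0) → u = 0) :
    (∀ x u, u ≠ 0 → 0 < T x u u) ∨ (∀ x u, u ≠ 0 → T x u u < 0) := by
  set e : EuclideanSpace ℝ (Fin n) :=
    EuclideanSpace.single (⟨0, by omega⟩ : Fin n) (1 : ℝ) with he_def
  have he : ‖e‖ = 1 := by simp [he_def, EuclideanSpace.norm_single]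
  have hquad : ∀ u : EuclideanSpace ℝ (Fin n), u ≠ 0 → T 0 u u = ‖u‖ ^ 2 * T 0 e e := by
    intro u hu
    have hnu : ‖u‖ ≠ 0 := norm_ne_zero_iff.mpr hu
    have hw : ‖(‖u‖⁻¹ • u)‖ = 1 := by rw [norm_smul]; simp [hnu]
    obtain ⟨γ, hγd, hγe⟩ := Stmt1Aux.exists_rotation hn e (‖u‖⁻¹ • u) he hw
    have h2 := hrot γ hγd 0 e e
    rw [map_zero γ, hγe] at h2
    have h3 := Stmt1Aux.scale T 0 (‖u‖) (‖u‖⁻¹ • u)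
    rw [smul_inv_smul₀ hnu] at h3
    rw [h3, h2]
  have hc : T 0 e e ≠ 0 := by
    intro hc0
    have hzero : ∀ u : EuclideanSpace ℝ (Fin n), T 0 u u = 0 := by
      intro u
      rcases eq_or_ne u 0 with rfl | h
      · simp
      · rw [hquad u h, hc0, mul_zero]
    have he0 : e = 0 := by
      apply hnd 0 e
      intro v
      have h1 := hzero (e + v)
      have h2 := hzero e
      have h3 := hzero v
      have hsy := hsymm 0 e v
      simp only [map_add, LinearMap.add_apply] at h1
      linarith
    rw [he0] at he
    simp at he
  rcases hc.lt_or_gt with hneg | hpos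
  · right
    have hcont' : ∀ u v, Continuous fun x => (-(T x)) u v := by
      intro u v
      simp only [LinearMap.neg_apply]; exact (hcont u v).neg
    have hsymm' : ∀ x u v, (-(T x)) u v = (-(T x)) v u := by
      intro x u v; simp [LinearMap.neg_apply, hsymm x u v]
    have hnd' : ∀ x u, (∀ v, (-(T x)) u v = 0) → u = 0 := by
      intro x u h
      apply hnd x u
      intro v
      have := h v
      simpa [LinearMap.neg_apply, neg_eq_zero] using this
    have h0' : ∀ u : EuclideanSpace ℝ (Fin n), u ≠ 0 → 0 < (-(T 0)) u u := by
      intro u hu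
      have : T 0 u u < 0 := by
        rw [hquad u hu]
        have hp : (0:ℝ) < ‖u‖ ^ 2 := by
          have := norm_pos_iff.mpr hu
          positivity
        exact mul_neg_of_pos_of_neg hp hneg
      simpa [LinearMap.neg_apply] using neg_pos.mpr this
    have hkey := Stmt1Aux.key (fun x => -(T x)) hcont' hsymm' hnd' h0'
    intro x u hu
    have := hkey x u hu
    simp only [LinearMap.neg_apply] at this
    linarith
  · left
    have h0 : ∀ u : EuclideanSpace ℝ (Fin n), u ≠ 0 → 0 < T 0 u u := by
      intro u hu
      rw [hquad u hu]
      have : (0:ℝ) < ‖u‖ ^ 2 := by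
        have := norm_pos_iff.mpr hu
        positivity
      exact mul_pos this hpos
    exact Stmt1Aux.key T hcont hsymm hnd h0
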